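/- Let f : (A, m) → (B, n) be a local homomorphism of commutative local rings such that B is finitely generated as an A-module and n = m·B. Denote by κ_A = A/m and κ_B = B/n the residue fields, and suppose κ_B = κ_A(ū) is generated over κ_A by the class ū of an element u ∈ B; let d = [κ_B : κ_A]. Then B is generated as an A-module by 1, u, …, u^{d−1}, and there exists a monic polynomial P ∈ A[T] of degree d with P(u) = 0 in B whose image in κ_A[T] is the minimal polynomial of ū over κ_A. -/

import Mathlib

open IsLocalRing Polynomial

/-- Let `f : (A,m) → (B,n)` be a local homomorphism of commutative local rings with `B` a
finitely generated `A`-module and `n = m·B`. If the residue field `κ_B` is generated over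
`κ_A` by the class `ū` of some `u ∈ B`, and `d = [κ_B : κ_A]`, then `B` is generated as an
`A`-module by `1, u, …, u^(d-1)` and there is a monic `P ∈ A[T]` of degree `d` with
`P(u) = 0` whose image in `κ_A[T]` is the minimal polynomial of `ū`. -/
theorem generated_by_powers_and_monic_lift_of_primitive_element
    {A B : Type*} [CommRing A] [CommRing B] [IsLocalRing A] [IsLocalRing B]
    [Algebra A B] (hloc : IsLocalHom (algebraMap A B)) [Module.Finite A B]
    (hn : maximalIdeal B = Ideal.map (algebraMap A B) (maximalIdeal A))
    [Algebra (ResidueField A) (ResidueField B)]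
    (hcomp : algebraMap (ResidueField A) (ResidueField B) =
      ResidueField.map (algebraMap A B))
    (u : B)
    (hgen : Algebra.adjoin (ResidueField A) {IsLocalRing.residue B u} = ⊤)
    (d : ℕ) (hd : d = Module.finrank (ResidueField A) (ResidueField B)) :
    Submodule.span A (Set.range fun i : Fin d => u ^ (i : ℕ)) = ⊤ ∧
    ∃ P : Polynomial A, P.Monic ∧ P.natDegree = d ∧ Polynomial.aeval u P = 0 ∧
      P.map (IsLocalRing.residue A) =
        minpoly (ResidueField A) (IsLocalRing.residue B u) := by
  classical
  haveI : IsLocalHom (algebraMap A B) := hloc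
  set κA := ResidueField A
  set κB := ResidueField B
  set ub := residue B u with hub
  letI : Module κA κB := Algebra.toModule
  replace hd : d = Module.finrank κA κB := by
    rw [hd]; congr 1
    refine Module.ext' _ _ fun c x => ?_
    obtain ⟨a, rfl⟩ := residue_surjective c
    rw [Algebra.smul_def, hcomp, ResidueField.map_residue]
    exact @Algebra.smul_def κA κB _ _ (Ideal.Quotient.algebraOfLiesOver (maximalIdeal B) (maximalIdeal A)) _ _
  have hcompmap : (algebraMap κA κB).comp (residue A) = (residue B).comp (algebraMap A B) := by
    ext a
    rw [RingHom.comp_apply, RingHom.comp_apply, hcomp]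
    exact ResidueField.map_residue _ a
  haveI : IsScalarTower A κA κB :=
    IsScalarTower.of_algebraMap_eq fun a => (congrFun (congrArg _ hcompmap.symm) a : _)
  haveI : IsScalarTower A B κB := IsScalarTower.of_algebraMap_eq' rfl
  haveI : Module.Finite A κB :=
    Module.Finite.of_surjective (IsScalarTower.toAlgHom A B κB).toLinearMap residue_surjective
  haveI : Module.Finite κA κB := Module.Finite.of_restrictScalars_finite A _ _
  have hint : IsIntegral κA ub := IsIntegral.of_finite _ _
  -- every element of κB is a polynomial in ub
  have hpoly : ∀ y : κB, ∃ f : κA[X], y = aeval ub f := by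
    intro y
    have : y ∈ Algebra.adjoin κA {ub} := hgen ▸ Algebra.mem_top
    rw [Algebra.adjoin_singleton_eq_range_aeval] at this
    obtain ⟨f, hf⟩ := this
    exact ⟨f, hf.symm⟩
  -- span of powers up to natDegree of the minpoly is everything
  have spanNat : Submodule.span κA
      (Set.range fun i : Fin (minpoly κA ub).natDegree => ub ^ (i : ℕ)) = ⊤ := by
    rw [eq_top_iff]
    rintro y -
    exact hint.mem_span_pow (hpoly y)
  -- the degree of the minimal polynomial is d
  have hdeg : (minpoly κA ub).natDegree = d := by
    rw [hd]
    refine le_antisymm ?_ ?_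
    · simpa using (linearIndependent_pow (K := κA) ub).fintype_card_le_finrank
    · simpa using finrank_le_of_span_eq_top spanNat
  have spanκ : Submodule.span κA (Set.range fun i : Fin d => ub ^ (i : ℕ)) = ⊤ := by
    rw [← hdeg]; exact spanNat
  have hd0 : 0 < d := by
    rw [hd]; exact Module.finrank_pos
  -- Nakayama: the powers of u generate B over A
  have hspan : Submodule.span A (Set.range fun i : Fin d => u ^ (i : ℕ)) = ⊤ := by
    rw [← top_le_iff]
    refine Submodule.le_of_le_smul_of_le_jacobson_bot (Module.finite_def.mp ‹Module.Finite A B›)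
      (IsLocalRing.jacobson_eq_maximalIdeal ⊥ bot_ne_top).ge ?_
    rw [Ideal.smul_top_eq_map, ← hn]
    rintro b -
    have hb : residue B b ∈ Submodule.span κA (Set.range fun i : Fin d => ub ^ (i : ℕ)) := by
      rw [spanκ]; trivial
    obtain ⟨c, hc⟩ := (Submodule.mem_span_range_iff_exists_fun κA).mp hb
    choose a ha using fun i => residue_surjective (R := A) (c i)
    refine Submodule.mem_sup.mpr ⟨∑ i, a i • u ^ (i : ℕ), ?_, b - ∑ i, a i • u ^ (i : ℕ), ?_, by ring⟩
    · exact Submodule.sum_mem _ fun i _ =>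
        Submodule.smul_mem _ _ (Submodule.subset_span ⟨i, rfl⟩)
    · show b - ∑ i, a i • u ^ (i : ℕ) ∈ maximalIdeal B
      rw [← Ideal.Quotient.eq_zero_iff_mem]
      have : (Ideal.Quotient.mk (maximalIdeal B)) (b - ∑ i, a i • u ^ (i : ℕ))
          = residue B b - ∑ i, c i • ub ^ (i : ℕ) := by
        rw [map_sub, map_sum]
        congr 1
        refine Finset.sum_congr rfl fun i _ => ?_
        rw [Algebra.smul_def, ← ha i]
        show residue B (algebraMap A B (a i) * u ^ (i : ℕ)) = _
        rw [map_mul, map_pow, ← RingHom.comp_apply, ← hcompmap, RingHom.comp_apply]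
        exact (Algebra.smul_def _ _).symm
      rw [this, hc, sub_self]; rfl
  refine ⟨hspan, ?_⟩
  -- construct the monic polynomial
  have hmem : u ^ d ∈ Submodule.span A (Set.range fun i : Fin d => u ^ (i : ℕ)) := by
    rw [hspan]; trivial
  obtain ⟨c, hc⟩ := (Submodule.mem_span_range_iff_exists_fun A).mp hmem
  set P : A[X] := X ^ d - ∑ i : Fin d, C (c i) * X ^ (i : ℕ) with hP
  have hdegsum := degree_sum_fin_lt c
  have hmonic : P.Monic := monic_X_pow_sub hdegsum
  have hdegP : P.degree = d := by
    rw [hP, degree_sub_eq_left_of_degree_lt (by simpa using hdegsum), degree_X_pow]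
  have hndegP : P.natDegree = d := natDegree_eq_of_degree_eq_some hdegP
  have haev : aeval u P = 0 := by
    rw [hP]
    simp only [map_sub, map_sum, map_pow, map_mul, aeval_X, aeval_C]
    rw [sub_eq_zero, ← hc]
    exact Finset.sum_congr rfl fun i _ => Algebra.smul_def _ _
  -- the image of P under residue kills ub
  have key : ∀ Q : A[X], aeval ub (Q.map (residue A)) = residue B (aeval u Q) := by
    intro Q
    rw [aeval_def, eval₂_map, hcompmap, aeval_def, hom_eval₂]
  have haevmap : aeval ub (P.map (residue A)) = 0 := by rw [key, haev, map_zero]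
  have hmonicmap : (P.map (residue A)).Monic := hmonic.map _
  have hndegmap : (P.map (residue A)).natDegree = d := by
    rw [hmonic.natDegree_map, hndegP]
  refine ⟨P, hmonic, hndegP, haev, ?_⟩
  by_contra hne
  have hsub0 : P.map (residue A) - minpoly κA ub ≠ 0 := sub_ne_zero.mpr hne
  have haevsub : aeval ub (P.map (residue A) - minpoly κA ub) = 0 := by
    rw [map_sub, haevmap, minpoly.aeval, sub_self]
  have hlt : (P.map (residue A) - minpoly κA ub).degree < (minpoly κA ub).degree := by
    have hdeq : (P.map (residue A)).degree = (minpoly κA ub).degree := by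
      rw [degree_eq_natDegree hmonicmap.ne_zero, degree_eq_natDegree (minpoly.ne_zero hint),
        hndegmap, hdeg]
    calc (P.map (residue A) - minpoly κA ub).degree
        < (P.map (residue A)).degree :=
          degree_sub_lt hdeq hmonicmap.ne_zero (by rw [hmonicmap.leadingCoeff, (minpoly.monic hint).leadingCoeff])
      _ = (minpoly κA ub).degree := hdeq
  exact (minpoly.degree_le_of_ne_zero κA ub hsub0 haevsub).not_gt hlt
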